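/- For every integer m ≥ 1 and every δ with (1−2p)p^m ≤ δ < (1−2p)p^{m−1}, the number of connected components of (0,1) ∖ C whose diameter is strictly greater than δ equals 2^m − 1. -/

import Mathlib

open Set Metric

/-- The set of connected components of `(0,1) ∖ C`. -/
def cantorGaps (C : Set ℝ) : Set (Set ℝ) :=
  {U | ∃ x ∈ Set.Ioo (0 : ℝ) 1 \ C, U = connectedComponentIn (Set.Ioo (0 : ℝ) 1 \ C) x}

namespace CantorAux

/-- apply a word of maps, head outermost. -/
def aw (p : ℝ) : List Bool → ℝ → ℝ
  | [], x => x
  | b :: w, x => if b then p * aw p w x + (1 - p) else p * aw p w x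

variable {p : ℝ}

lemma aw_nil (x : ℝ) : aw p [] x = x := rfl

lemma aw_cons (b : Bool) (w : List Bool) (x : ℝ) :
    aw p (b :: w) x = if b then p * aw p w x + (1 - p) else p * aw p w x := rfl

lemma aw_append (w w' : List Bool) (x : ℝ) :
    aw p (w ++ w') x = aw p w (aw p w' x) := by
  induction w with
  | nil => rfl
  | cons b w ih => simp [aw_cons, ih]

lemma aw_affine (w : List Bool) (x : ℝ) :
    aw p w x = p ^ w.length * x + aw p w 0 := by
  induction w with
  | nil => simp [aw]
  | cons b w ih =>
    cases b <;> simp only [aw_cons, if_true, if_false, Bool.false_eq_true, List.length_cons,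
      pow_succ, ih] <;> ring

lemma aw_sub (w : List Bool) (x y : ℝ) :
    aw p w x - aw p w y = p ^ w.length * (x - y) := by
  rw [aw_affine w x, aw_affine w y]; ring

lemma aw_lt (hp0 : 0 < p) (w : List Bool) {x y : ℝ} (h : x < y) :
    aw p w x < aw p w y := by
  have := aw_sub (p := p) w y x
  nlinarith [pow_pos hp0 w.length]

lemma aw_mem_Icc (hp0 : 0 < p) (hp1 : p < 1/2) (w : List Bool) {x : ℝ}
    (h : x ∈ Icc (0:ℝ) 1) : aw p w x ∈ Icc (0:ℝ) 1 := by
  induction w with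
  | nil => exact h
  | cons b w ih =>
    obtain ⟨h0, h1⟩ := ih
    cases b <;> simp only [aw_cons, if_true, if_false, Bool.false_eq_true] <;>
      constructor <;> nlinarith

lemma aw_mem_Ioo (hp0 : 0 < p) (hp1 : p < 1/2) (w : List Bool) {x : ℝ}
    (h : x ∈ Ioo (0:ℝ) 1) : aw p w x ∈ Ioo (0:ℝ) 1 := by
  induction w with
  | nil => exact h
  | cons b w ih =>
    obtain ⟨h0, h1⟩ := ih
    cases b <;> simp only [aw_cons, if_true, if_false, Bool.false_eq_true] <;>
      constructor <;> nlinarith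

end CantorAux

section Main

open CantorAux

variable {p : ℝ} (hp0 : 0 < p) (hp1 : p < 1/2)
variable {C : Set ℝ} (hCne : C.Nonempty) (hCcpt : IsCompact C)
variable (hC : C = (fun x => p * x) '' C ∪ (fun x => p * x + (1 - p)) '' C)

include hp0 hp1 hCne hCcpt hC

lemma C_subset_unit : C ⊆ Icc (0:ℝ) 1 ∧ (0:ℝ) ∈ C ∧ (1:ℝ) ∈ C := by
  obtain ⟨b, hbC, hbmax⟩ := hCcpt.exists_isGreatest hCne
  obtain ⟨a, haC, hamin⟩ := hCcpt.exists_isLeast hCne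
  have hab : a ≤ b := hamin hbC
  -- f2 b ∈ C
  have hf2b : p * b + (1 - p) ∈ C := by
    rw [hC]; exact Or.inr ⟨b, hbC, rfl⟩
  have hf1a : p * a ∈ C := by
    rw [hC]; exact Or.inl ⟨a, haC, rfl⟩
  have hb1 : 1 ≤ b := by
    have := hbmax hf2b
    nlinarith
  have ha0 : a ≤ 0 := by
    have := hamin hf1a
    nlinarith
  -- b ∈ image
  have hb' : b ≤ 1 := by
    have : b ∈ (fun x => p * x) '' C ∪ (fun x => p * x + (1 - p)) '' C := hC ▸ hbC
    rcases this with ⟨c, hc, hcb⟩ | ⟨c, hc, hcb⟩ <;> dsimp only at hcb <;>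
      · have := hbmax hc
        nlinarith
  have ha' : 0 ≤ a := by
    have : a ∈ (fun x => p * x) '' C ∪ (fun x => p * x + (1 - p)) '' C := hC ▸ haC
    rcases this with ⟨c, hc, hca⟩ | ⟨c, hc, hca⟩ <;> dsimp only at hca <;>
      · have := hamin hc
        nlinarith
  have hbe : b = 1 := le_antisymm hb' hb1
  have hae : a = 0 := le_antisymm ha0 ha'
  refine ⟨fun x hx => ⟨hae ▸ hamin hx, hbe ▸ hbmax hx⟩, hae ▸ haC, hbe ▸ hbC⟩

lemma middle_gap : C ∩ Ioo p (1-p) = ∅ := by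
  obtain ⟨hsub, h0, h1⟩ := C_subset_unit hp0 hp1 hCne hCcpt hC
  ext x
  simp only [mem_inter_iff, mem_Ioo, mem_empty_iff_false, iff_false, not_and]
  intro hxC
  have : x ∈ (fun x => p * x) '' C ∪ (fun x => p * x + (1 - p)) '' C := hC ▸ hxC
  rcases this with ⟨c, hc, hcx⟩ | ⟨c, hc, hcx⟩ <;> dsimp only at hcx <;>
    obtain ⟨hc0, hc1⟩ := hsub hc <;> intro h1 h2 <;> nlinarith

omit hp0 hp1 hCne hCcpt in
lemma aw_mem_C {w : List Bool} {x : ℝ} (hx : x ∈ C) : aw p w x ∈ C := by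
  induction w with
  | nil => exact hx
  | cons b w ih =>
    cases b
    · simp only [aw_cons, Bool.false_eq_true, if_false]
      rw [hC]; exact Or.inl ⟨_, ih, rfl⟩
    · simp only [aw_cons, if_true]
      rw [hC]; exact Or.inr ⟨_, ih, rfl⟩

lemma p_mem_C : p ∈ C ∧ (1 - p) ∈ C := by
  obtain ⟨hsub, h0, h1⟩ := C_subset_unit hp0 hp1 hCne hCcpt hC
  constructor
  · rw [hC]; exact Or.inl ⟨1, h1, by simp⟩
  · rw [hC]; exact Or.inr ⟨0, h0, by simp⟩

/-- if t ∉ C and t ∈ (0,1) then aw w t ∉ C -/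
lemma aw_not_mem_C {w : List Bool} {t : ℝ} (ht : t ∈ Ioo (0:ℝ) 1) (htC : t ∉ C) :
    aw p w t ∉ C := by
  obtain ⟨hsub, h0, h1⟩ := C_subset_unit hp0 hp1 hCne hCcpt hC
  induction w with
  | nil => exact htC
  | cons b w ih =>
    have hz : aw p w t ∈ Ioo (0:ℝ) 1 := aw_mem_Ioo hp0 hp1 w ht
    obtain ⟨hz0, hz1⟩ := hz
    intro hmem
    cases b
    · simp only [aw_cons, Bool.false_eq_true, if_false] at hmem
      have : p * aw p w t ∈ (fun x => p * x) '' C ∪ (fun x => p * x + (1 - p)) '' C :=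
        hC ▸ hmem
      rcases this with ⟨c, hc, hcx⟩ | ⟨c, hc, hcx⟩ <;> dsimp only at hcx
      · have : aw p w t = c := by nlinarith
        exact ih (this ▸ hc)
      · obtain ⟨hc0, hc1⟩ := hsub hc
        nlinarith
    · simp only [aw_cons, if_true] at hmem
      have : p * aw p w t + (1 - p) ∈ (fun x => p * x) '' C ∪ (fun x => p * x + (1 - p)) '' C :=
        hC ▸ hmem
      rcases this with ⟨c, hc, hcx⟩ | ⟨c, hc, hcx⟩ <;> dsimp only at hcx
      · obtain ⟨hc0, hc1⟩ := hsub hc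
        nlinarith
      · have : aw p w t = c := by nlinarith
        exact ih (this ▸ hc)


/-- the gap interval indexed by word w -/
def gapI (p : ℝ) (w : List Bool) : Set ℝ := Ioo (aw p w p) (aw p w (1 - p))

omit hCne hCcpt hC in
lemma mem_gapI_iff {w : List Bool} {x : ℝ} :
    x ∈ gapI p w ↔ ∃ t ∈ Ioo p (1 - p), x = aw p w t := by
  constructor
  · rintro ⟨h1, h2⟩
    refine ⟨(x - aw p w 0) / p ^ w.length, ⟨?_, ?_⟩, ?_⟩
    · have := aw_affine (p := p) w p
      have hpow : (0:ℝ) < p ^ w.length := pow_pos hp0 _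
      rw [lt_div_iff₀ hpow]
      linarith [aw_affine (p := p) w p]
    · have hpow : (0:ℝ) < p ^ w.length := pow_pos hp0 _
      rw [div_lt_iff₀ hpow]
      linarith [aw_affine (p := p) w (1 - p)]
    · have hpow : (0:ℝ) < p ^ w.length := pow_pos hp0 _
      rw [aw_affine, mul_div_cancel₀ _ (ne_of_gt hpow)]
      ring
  · rintro ⟨t, ⟨ht1, ht2⟩, rfl⟩
    exact ⟨aw_lt hp0 w ht1, aw_lt hp0 w ht2⟩

omit hCne hCcpt hC in
lemma gapI_nonempty (w : List Bool) : (gapI p w).Nonempty :=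
  nonempty_Ioo.2 (aw_lt hp0 w (by linarith))

lemma gapI_subset (w : List Bool) : gapI p w ⊆ Ioo (0:ℝ) 1 \ C := by
  intro x hx
  obtain ⟨t, htm, rfl⟩ := (mem_gapI_iff hp0 hp1).1 hx
  have ht01 : t ∈ Ioo (0:ℝ) 1 := ⟨by linarith [htm.1], by linarith [htm.2]⟩
  have htC : t ∉ C := fun h => by
    have := middle_gap hp0 hp1 hCne hCcpt hC
    exact absurd (Set.mem_inter h htm) (by rw [this]; exact id)
  exact ⟨aw_mem_Ioo hp0 hp1 w ht01, aw_not_mem_C hp0 hp1 hCne hCcpt hC ht01 htC⟩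

/-- each gap is the connected component of any of its points -/
lemma gapI_eq_component {w : List Bool} {x : ℝ} (hx : x ∈ gapI p w) :
    connectedComponentIn (Ioo (0:ℝ) 1 \ C) x = gapI p w := by
  obtain ⟨hpc, h1pc⟩ := p_mem_C hp0 hp1 hCne hCcpt hC
  have haC : aw p w p ∈ C := aw_mem_C hC hpc
  have hbC : aw p w (1 - p) ∈ C := aw_mem_C hC h1pc
  have hsub : gapI p w ⊆ Ioo (0:ℝ) 1 \ C := gapI_subset hp0 hp1 hCne hCcpt hC w
  apply Subset.antisymm
  · intro y hy
    have hconn : IsPreconnected (connectedComponentIn (Ioo (0:ℝ) 1 \ C) x) :=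
      isPreconnected_connectedComponentIn
    have hord := hconn.ordConnected
    have hxmem : x ∈ connectedComponentIn (Ioo (0:ℝ) 1 \ C) x :=
      mem_connectedComponentIn (hsub hx)
    have hsubc := connectedComponentIn_subset (Ioo (0:ℝ) 1 \ C) x
    by_contra hyn
    simp only [gapI, mem_Ioo, not_and_or, not_lt] at hyn
    rcases hyn with h | h
    · have : aw p w p ∈ connectedComponentIn (Ioo (0:ℝ) 1 \ C) x :=
        hord.out hy hxmem ⟨h, le_of_lt hx.1⟩
      exact (hsubc this).2 haC
    · have : aw p w (1 - p) ∈ connectedComponentIn (Ioo (0:ℝ) 1 \ C) x :=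
        hord.out hxmem hy ⟨le_of_lt hx.2, h⟩
      exact (hsubc this).2 hbC
  · exact isPreconnected_Ioo.subset_connectedComponentIn hx hsub

/-- every point of (0,1) \ C lies in some gap -/
lemma exists_gap {x : ℝ} (hx : x ∈ Ioo (0:ℝ) 1 \ C) : ∃ w, x ∈ gapI p w := by
  obtain ⟨hsub, h0, h1⟩ := C_subset_unit hp0 hp1 hCne hCcpt hC
  obtain ⟨hpc, h1pc⟩ := p_mem_C hp0 hp1 hCne hCcpt hC
  by_contra hng
  push_neg at hng
  -- every representation avoids the middle gap; build arbitrarily deep representations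
  have step : ∀ n : ℕ, ∃ w t, (w : List Bool).length = n ∧ t ∈ Ioo (0:ℝ) 1 \ C ∧
      x = aw p w t := by
    intro n
    induction n with
    | zero => exact ⟨[], x, rfl, hx, rfl⟩
    | succ n ih =>
      obtain ⟨w, t, hlen, ⟨ht01, htC⟩, hxe⟩ := ih
      have htm : t ∉ Ioo p (1 - p) := by
        intro htm
        exact hng w ((mem_gapI_iff hp0 hp1).2 ⟨t, htm, hxe⟩)
      have htp : t ≠ p := fun h => htC (h ▸ hpc)
      have ht1p : t ≠ 1 - p := fun h => htC (h ▸ h1pc)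
      simp only [mem_Ioo, not_and_or, not_lt] at htm
      rcases htm with h | h
      · -- t ≤ p, so t < p
        have htlt : t < p := lt_of_le_of_ne h htp
        refine ⟨w ++ [false], t / p, by simp [hlen], ⟨⟨div_pos ht01.1 hp0, ?_⟩, ?_⟩, ?_⟩
        · rw [div_lt_one hp0]; exact htlt
        · intro hmem
          apply htC
          have : p * (t / p) ∈ C := by
            rw [hC]; exact Or.inl ⟨_, hmem, rfl⟩
          rwa [mul_div_cancel₀ _ (ne_of_gt hp0)] at this
        · rw [aw_append]
          have : aw p [false] (t / p) = t := by
            simp only [aw_cons, aw_nil, Bool.false_eq_true, if_false]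
            rw [mul_div_cancel₀ _ (ne_of_gt hp0)]
          rw [this, hxe]
      · -- 1 - p ≤ t, so 1 - p < t
        have htlt : 1 - p < t := lt_of_le_of_ne h (Ne.symm ht1p)
        refine ⟨w ++ [true], (t - (1 - p)) / p, by simp [hlen], ⟨⟨?_, ?_⟩, ?_⟩, ?_⟩
        · apply div_pos (by linarith) hp0
        · rw [div_lt_one hp0]; linarith [ht01.2]
        · intro hmem
          apply htC
          have : p * ((t - (1 - p)) / p) + (1 - p) ∈ C := by
            rw [hC]; exact Or.inr ⟨_, hmem, rfl⟩
          rwa [mul_div_cancel₀ _ (ne_of_gt hp0), sub_add_cancel] at this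
        · rw [aw_append]
          have : aw p [true] ((t - (1 - p)) / p) = t := by
            simp only [aw_cons, aw_nil, if_true]
            rw [mul_div_cancel₀ _ (ne_of_gt hp0)]
            ring
          rw [this, hxe]
  -- conclude x ∈ C
  have hxC : x ∈ C := by
    have hclosed : IsClosed C := hCcpt.isClosed
    rw [← hclosed.closure_eq]
    rw [Real.mem_closure_iff]
    intro ε hε
    obtain ⟨n, hn⟩ := exists_pow_lt_of_lt_one hε (by linarith : p < 1)
    obtain ⟨w, t, hlen, ⟨ht01, htC⟩, hxe⟩ := step n
    refine ⟨aw p w 0, aw_mem_C hC h0, ?_⟩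
    have := aw_sub (p := p) w t 0
    rw [← hxe, sub_zero] at this
    rw [abs_sub_comm, this, abs_of_pos (mul_pos (pow_pos hp0 _) ht01.1)]
    calc p ^ w.length * t < p ^ w.length * 1 := by
          apply mul_lt_mul_of_pos_left ht01.2 (pow_pos hp0 _)
      _ = p ^ n := by rw [mul_one, hlen]
      _ < ε := hn
  exact hx.2 hxC


omit hCne hCcpt hC in
lemma diam_gapI (w : List Bool) :
    Metric.diam (gapI p w) = (1 - 2 * p) * p ^ w.length := by
  unfold gapI
  rw [Real.diam_Ioo (le_of_lt (aw_lt hp0 w (by linarith)))]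
  have := aw_sub (p := p) w (1 - p) p
  rw [this]; ring

omit hCne hCcpt hC in
lemma aw_inj {w w' : List Bool} (hlen : w.length = w'.length)
    (h : aw p w p = aw p w' p) : w = w' := by
  induction w generalizing w' with
  | nil =>
    cases w' with
    | nil => rfl
    | cons b u => simp at hlen
  | cons b u ih =>
    cases w' with
    | nil => simp at hlen
    | cons b' u' =>
      simp only [List.length_cons, Nat.add_right_cancel_iff] at hlen
      have hz : aw p u p ∈ Ioo (0:ℝ) 1 :=
        aw_mem_Ioo hp0 hp1 u ⟨hp0, by linarith⟩
      have hz' : aw p u' p ∈ Ioo (0:ℝ) 1 :=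
        aw_mem_Ioo hp0 hp1 u' ⟨hp0, by linarith⟩
      obtain ⟨hz0, hz1⟩ := hz
      obtain ⟨hz0', hz1'⟩ := hz'
      cases b <;> cases b' <;>
        simp only [aw_cons, if_true, if_false, Bool.false_eq_true] at h
      · have : aw p u p = aw p u' p := by nlinarith
        rw [ih hlen this]
      · nlinarith
      · nlinarith
      · have : aw p u p = aw p u' p := by nlinarith
        rw [ih hlen this]

omit hCne hCcpt hC in
lemma gapI_injective : Function.Injective (gapI p) := by
  intro w w' h
  -- equal diameters force equal lengths
  have hd : (1 - 2 * p) * p ^ w.length = (1 - 2 * p) * p ^ w'.length := by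
    rw [← diam_gapI hp0 hp1 w, ← diam_gapI hp0 hp1 w', h]
  have hpow : p ^ w.length = p ^ w'.length := by
    have h12 : (0:ℝ) < 1 - 2 * p := by linarith
    exact mul_left_cancel₀ (ne_of_gt h12) hd
  have hlen : w.length = w'.length := by
    by_contra hne
    rcases Nat.lt_or_ge w.length w'.length with hlt | hge
    · have := pow_lt_pow_right_of_lt_one₀ hp0 (by linarith : p < 1) hlt
      linarith
    · have hlt : w'.length < w.length := lt_of_le_of_ne hge (fun h => hne h.symm)
      have := pow_lt_pow_right_of_lt_one₀ hp0 (by linarith : p < 1) hlt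
      linarith
  -- equal left endpoints
  have ha : aw p w p = aw p w' p := by
    have h1 : aw p w p < aw p w (1 - p) := aw_lt hp0 w (by linarith)
    have h1' : aw p w' p < aw p w' (1 - p) := aw_lt hp0 w' (by linarith)
    -- from Ioo equality
    by_contra hne
    rcases lt_or_gt_of_ne hne with hlt | hlt
    · -- aw w p < aw w' p ; pick point in (aw w p, min (aw w' p) (aw w (1-p)))
      set y := (aw p w p + min (aw p w' p) (aw p w (1 - p))) / 2 with hy
      have hy1 : aw p w p < y := by
        have : aw p w p < min (aw p w' p) (aw p w (1 - p)) := lt_min hlt h1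
        simp only [hy]; linarith
      have hy2 : y < aw p w (1 - p) := by
        have h3 : min (aw p w' p) (aw p w (1 - p)) ≤ aw p w (1 - p) := min_le_right _ _
        simp only [hy]; linarith
      have hy3 : y < aw p w' p := by
        have h3 : min (aw p w' p) (aw p w (1 - p)) ≤ aw p w' p := min_le_left _ _
        simp only [hy]; linarith
      have : y ∈ gapI p w' := h ▸ (⟨hy1, hy2⟩ : y ∈ gapI p w)
      exact absurd this.1 (not_lt.2 (le_of_lt hy3))
    · set y := (aw p w' p + min (aw p w p) (aw p w' (1 - p))) / 2 with hy
      have hy1 : aw p w' p < y := by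
        have : aw p w' p < min (aw p w p) (aw p w' (1 - p)) := lt_min hlt h1'
        simp only [hy]; linarith
      have hy2 : y < aw p w' (1 - p) := by
        have h3 : min (aw p w p) (aw p w' (1 - p)) ≤ aw p w' (1 - p) := min_le_right _ _
        simp only [hy]; linarith
      have hy3 : y < aw p w p := by
        have h3 : min (aw p w p) (aw p w' (1 - p)) ≤ aw p w p := min_le_left _ _
        simp only [hy]; linarith
      have : y ∈ gapI p w := h ▸ (⟨hy1, hy2⟩ : y ∈ gapI p w')
      exact absurd this.1 (not_lt.2 (le_of_lt hy3))
  exact aw_inj hp0 hp1 hlen ha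

end Main

/-- cardinality of short boolean words -/
lemma shortWords_card (m : ℕ) :
    {w : List Bool | w.length < m}.Finite ∧
      {w : List Bool | w.length < m}.ncard = 2 ^ m - 1 := by
  induction m with
  | zero => simp
  | succ m ih =>
    obtain ⟨hfin, hcard⟩ := ih
    have hdecomp : {w : List Bool | w.length < m + 1} =
        insert [] ((List.cons false '' {w | w.length < m}) ∪
          (List.cons true '' {w | w.length < m})) := by
      ext w
      cases w with
      | nil => simp
      | cons b u =>
        cases b <;> simp [Nat.succ_lt_succ_iff]
    have hfinU : ((List.cons false '' {w : List Bool | w.length < m}) ∪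
        (List.cons true '' {w | w.length < m})).Finite :=
      (hfin.image _).union (hfin.image _)
    have hnil : ([] : List Bool) ∉ ((List.cons false '' {w : List Bool | w.length < m}) ∪
        (List.cons true '' {w | w.length < m})) := by
      rintro (⟨u, _, hu⟩ | ⟨u, _, hu⟩) <;> simp at hu
    have hdisj : Disjoint (List.cons false '' {w : List Bool | w.length < m})
        (List.cons true '' {w | w.length < m}) := by
      rw [Set.disjoint_left]
      rintro x ⟨u, _, rfl⟩ ⟨u', _, h⟩
      simp at h
    have hinjf : Function.Injective (List.cons false (α := Bool)) := fun a b h => by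
      simpa using h
    have hinjt : Function.Injective (List.cons true (α := Bool)) := fun a b h => by
      simpa using h
    rw [hdecomp]
    constructor
    · exact hfinU.insert _
    · rw [Set.ncard_insert_of_notMem hnil hfinU,
        Set.ncard_union_eq hdisj (hfin.image _) (hfin.image _),
        Set.ncard_image_of_injective _ hinjf, Set.ncard_image_of_injective _ hinjt, hcard]
      have := Nat.one_le_two_pow (n := m)
      rw [pow_succ]
      omega

/-- For every `m ≥ 1` and `(1−2p)pᵐ ≤ δ < (1−2p)p^{m−1}`, the number of connected
components of `(0,1) ∖ C` of diameter strictly greater than `δ` equals `2ᵐ − 1`. -/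
theorem stmt12 (p : ℝ) (hp : p ∈ Set.Ioo (0 : ℝ) (1 / 2))
    (C : Set ℝ) (hCne : C.Nonempty) (hCcpt : IsCompact C)
    (hC : C = (fun x => p * x) '' C ∪ (fun x => p * x + (1 - p)) '' C)
    (m : ℕ) (hm : 1 ≤ m) (δ : ℝ)
    (hδ1 : (1 - 2 * p) * p ^ m ≤ δ) (hδ2 : δ < (1 - 2 * p) * p ^ (m - 1)) :
    {U ∈ cantorGaps C | δ < Metric.diam U}.ncard = 2 ^ m - 1 := by
  obtain ⟨hp0, hp1⟩ := hp
  have h12 : (0:ℝ) < 1 - 2 * p := by linarith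
  have hkey : {U ∈ cantorGaps C | δ < Metric.diam U} =
      gapI p '' {w : List Bool | w.length < m} := by
    ext U
    constructor
    · rintro ⟨⟨x, hx, rfl⟩, hdiam⟩
      obtain ⟨w, hw⟩ := exists_gap hp0 hp1 hCne hCcpt hC hx
      have hUe := gapI_eq_component hp0 hp1 hCne hCcpt hC hw
      rw [hUe] at hdiam ⊢
      refine ⟨w, ?_, rfl⟩
      rw [diam_gapI hp0 hp1] at hdiam
      have hlt : (1 - 2 * p) * p ^ m < (1 - 2 * p) * p ^ w.length :=
        lt_of_le_of_lt hδ1 hdiam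
      have : p ^ m < p ^ w.length := lt_of_mul_lt_mul_left hlt (le_of_lt h12)
      exact (pow_lt_pow_iff_right_of_lt_one₀ hp0 (by linarith)).1 this
    · rintro ⟨w, hwlen, rfl⟩
      obtain ⟨x, hx⟩ := gapI_nonempty hp0 hp1 w
      have hxm : x ∈ Ioo (0:ℝ) 1 \ C := gapI_subset hp0 hp1 hCne hCcpt hC w hx
      refine ⟨⟨x, hxm, (gapI_eq_component hp0 hp1 hCne hCcpt hC hx).symm⟩, ?_⟩
      rw [diam_gapI hp0 hp1]
      have hle : w.length ≤ m - 1 := by have := hwlen; simp only [Set.mem_setOf_eq] at this; omega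
      have : p ^ (m - 1) ≤ p ^ w.length :=
        pow_le_pow_of_le_one (le_of_lt hp0) (by linarith) hle
      calc δ < (1 - 2 * p) * p ^ (m - 1) := hδ2
        _ ≤ (1 - 2 * p) * p ^ w.length := by nlinarith
  rw [hkey, Set.ncard_image_of_injective _ (gapI_injective hp0 hp1),
    (shortWords_card m).2]
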